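/- Let M ≥ 3 and K ≥ 2 be integers. Then ∫₀^∞ x⁻¹ f_{M,1,K}(x) dx + ∫₀^∞ x⁻¹ f_{M−1,2,K}(x) dx = α_{M,K} + K α_{M−1,K−1} − (K−1) α_{M−1,K}. -/

import Mathlib

open MeasureTheory ProbabilityTheory Filter

/-- Regularized lower incomplete gamma function `G(M,x) = (1/Γ(M)) ∫₀ˣ e^{-t} t^{M-1} dt`. -/
noncomputable def regGamma (M : ℕ) (x : ℝ) : ℝ :=
  (1 / Real.Gamma M) * ∫ t in (0:ℝ)..x, Real.exp (-t) * t ^ (M - 1)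

/-- Gamma(M,1) density `g(M,x) = e^{-x} x^{M-1} / Γ(M)`. -/
noncomputable def gammaDens (M : ℕ) (x : ℝ) : ℝ :=
  Real.exp (-x) * x ^ (M - 1) / Real.Gamma M

/-- The constant `α_{M,K} = ∫₀^∞ K (e^{-x} x^{M-2} / Γ(M)) G(M,x)^{K-1} dx`. -/
noncomputable def alphaMK (M K : ℕ) : ℝ :=
  ∫ x in Set.Ioi (0:ℝ), K * (Real.exp (-x) * x ^ (M - 2) / Real.Gamma M) * regGamma M x ^ (K - 1)

/-- Density `f_{M,r,K}` of the `r`-th largest among `K` i.i.d. Gamma(M,1) random variables. -/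
noncomputable def fOrd (M r K : ℕ) (x : ℝ) : ℝ :=
  (K.factorial : ℝ) / ((K - r).factorial * (r - 1).factorial) *
    regGamma M x ^ (K - r) * (1 - regGamma M x) ^ (r - 1) * gammaDens M x

lemma expPoly_integrable (n : ℕ) :
    IntegrableOn (fun x : ℝ => Real.exp (-x) * x ^ n) (Set.Ioi 0) := by
  have h := Real.GammaIntegral_convergent (s := (n : ℝ) + 1) (by positivity)
  refine h.congr_fun (fun x hx => ?_) measurableSet_Ioi
  simp [Real.rpow_natCast]

lemma expPoly_integral (n : ℕ) :
    ∫ x in Set.Ioi (0:ℝ), Real.exp (-x) * x ^ n = Real.Gamma ((n : ℝ) + 1) := by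
  rw [Real.Gamma_eq_integral (by positivity)]
  refine setIntegral_congr_fun measurableSet_Ioi (fun x hx => ?_)
  simp [Real.rpow_natCast]

lemma continuous_regGamma (M : ℕ) : Continuous (regGamma M) := by
  apply Continuous.mul continuous_const
  apply intervalIntegral.continuous_primitive
  intro a b
  exact Continuous.intervalIntegrable (by continuity) a b

lemma regGamma_nonneg {M : ℕ} (hM : 1 ≤ M) {x : ℝ} (hx : 0 ≤ x) : 0 ≤ regGamma M x := by
  have hΓ : 0 < Real.Gamma (M : ℝ) :=
    Real.Gamma_pos_of_pos (by exact_mod_cast Nat.pos_of_ne_zero (by omega))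
  apply mul_nonneg (by positivity)
  apply intervalIntegral.integral_nonneg hx
  intro t ht
  exact mul_nonneg (Real.exp_nonneg _) (pow_nonneg ht.1 _)

lemma regGamma_le_one {M : ℕ} (hM : 1 ≤ M) {x : ℝ} (hx : 0 ≤ x) : regGamma M x ≤ 1 := by
  have hΓ : 0 < Real.Gamma (M : ℝ) :=
    Real.Gamma_pos_of_pos (by exact_mod_cast Nat.pos_of_ne_zero (by omega))
  have key : (∫ t in (0:ℝ)..x, Real.exp (-t) * t ^ (M - 1)) ≤ Real.Gamma (M : ℝ) := by
    rw [intervalIntegral.integral_of_le hx]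
    have hmono : (∫ t in Set.Ioc (0:ℝ) x, Real.exp (-t) * t ^ (M - 1))
        ≤ ∫ t in Set.Ioi (0:ℝ), Real.exp (-t) * t ^ (M - 1) := by
      refine setIntegral_mono_set (expPoly_integrable (M - 1)) ?_
        (HasSubset.Subset.eventuallyLE Set.Ioc_subset_Ioi_self)
      filter_upwards [ae_restrict_mem measurableSet_Ioi] with t ht
      have : 0 < t := ht
      positivity
    refine hmono.trans_eq ?_
    rw [expPoly_integral]
    congr 1
    have : ((M - 1 : ℕ) : ℝ) = (M : ℝ) - 1 := by
      push_cast [Nat.cast_sub hM]; ring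
    rw [this]; ring
  unfold regGamma
  calc (1 / Real.Gamma (M : ℝ)) * ∫ t in (0:ℝ)..x, Real.exp (-t) * t ^ (M - 1)
      ≤ (1 / Real.Gamma (M : ℝ)) * Real.Gamma (M : ℝ) :=
        mul_le_mul_of_nonneg_left key (by positivity)
    _ = 1 := by field_simp

lemma integrable_main (n j M : ℕ) (hM : 1 ≤ M) :
    IntegrableOn (fun x : ℝ => Real.exp (-x) * x ^ n * regGamma M x ^ j) (Set.Ioi 0) := by
  refine (expPoly_integrable n).mono' ?_ ?_
  · exact ((((Real.continuous_exp.comp continuous_neg).mul (continuous_pow n)).mul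
      ((continuous_regGamma M).pow j)).aestronglyMeasurable).restrict
  · rw [ae_restrict_iff' measurableSet_Ioi]
    filter_upwards with x hx
    have hx0 : (0:ℝ) ≤ x := le_of_lt hx
    have h0 := regGamma_nonneg hM hx0
    have h1 := regGamma_le_one hM hx0
    have hb : regGamma M x ^ j ≤ 1 := pow_le_one₀ h0 h1
    have hnn : 0 ≤ Real.exp (-x) * x ^ n := by positivity
    rw [Real.norm_eq_abs, abs_of_nonneg (mul_nonneg hnn (pow_nonneg h0 j))]
    calc Real.exp (-x) * x ^ n * regGamma M x ^ j
        ≤ Real.exp (-x) * x ^ n * 1 := mul_le_mul_of_nonneg_left hb hnn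
      _ = Real.exp (-x) * x ^ n := mul_one _

/-- **Corollary 5 (SUS for 2 users).** Integral identity for the average minimum transmit
power `p_S(2)` with semi-orthogonal user selection (`M ≥ 3`, `K ≥ 2`):
`∫ x⁻¹ f_{M,1,K} + ∫ x⁻¹ f_{M-1,2,K} = α_{M,K} + K α_{M-1,K-1} - (K-1) α_{M-1,K}`. -/
theorem avg_min_power_SUS_two_users (M K : ℕ) (hM : 3 ≤ M) (hK : 2 ≤ K) :
    (∫ x in Set.Ioi (0:ℝ), x⁻¹ * fOrd M 1 K x) +
      (∫ x in Set.Ioi (0:ℝ), x⁻¹ * fOrd (M - 1) 2 K x)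
    = alphaMK M K + (K : ℝ) * alphaMK (M - 1) (K - 1)
        - ((K : ℝ) - 1) * alphaMK (M - 1) K := by
  have hM1 : (1:ℕ) ≤ M := by omega
  have hM1' : (1:ℕ) ≤ M - 1 := by omega
  have hΓM : 0 < Real.Gamma (M : ℝ) :=
    Real.Gamma_pos_of_pos (by exact_mod_cast Nat.pos_of_ne_zero (by omega))
  have hΓM' : 0 < Real.Gamma ((M - 1 : ℕ) : ℝ) :=
    Real.Gamma_pos_of_pos (by exact_mod_cast Nat.pos_of_ne_zero (by omega))
  -- factorial facts
  have hfac1n : K.factorial = K * (K - 1).factorial := by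
    have h : K - 1 + 1 = K := by omega
    calc K.factorial = (K - 1 + 1).factorial := by rw [h]
      _ = (K - 1 + 1) * (K - 1).factorial := Nat.factorial_succ _
      _ = K * (K - 1).factorial := by rw [h]
  have hfac2n : K.factorial = K * ((K - 1) * (K - 2).factorial) := by
    have h2 : K - 2 + 1 = K - 1 := by omega
    rw [hfac1n]
    congr 1
    calc (K - 1).factorial = (K - 2 + 1).factorial := by rw [h2]
      _ = (K - 2 + 1) * (K - 2).factorial := Nat.factorial_succ _
      _ = (K - 1) * (K - 2).factorial := by rw [h2]
  have hfac1 : (K.factorial : ℝ) = K * (K - 1).factorial := by exact_mod_cast hfac1n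
  have hfac2 : (K.factorial : ℝ) = K * (((K - 1 : ℕ) : ℝ) * (K - 2).factorial) := by
    exact_mod_cast hfac2n
  have hK1cast : ((K - 1 : ℕ) : ℝ) = (K : ℝ) - 1 := by
    push_cast [Nat.cast_sub (by omega : 1 ≤ K)]; ring
  -- Part 1 : first integral equals alphaMK M K
  have part1 : (∫ x in Set.Ioi (0:ℝ), x⁻¹ * fOrd M 1 K x) = alphaMK M K := by
    unfold alphaMK
    refine setIntegral_congr_fun measurableSet_Ioi (fun x hx => ?_)
    have hx0 : (0:ℝ) < x := hx
    simp only [fOrd, gammaDens]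
    have hpow : x ^ (M - 1) = x ^ (M - 2) * x := by
      rw [show M - 1 = (M - 2) + 1 by omega, pow_succ]
    rw [hpow, hfac1]
    have hne : ((K - 1).factorial : ℝ) ≠ 0 := by
      exact_mod_cast (Nat.factorial_pos _).ne'
    simp only [Nat.sub_self, Nat.factorial_zero, pow_zero]
    field_simp
    ring
  -- Part 2
  set Γ' := Real.Gamma ((M - 1 : ℕ) : ℝ) with hΓ'def
  set B : ℕ → ℝ := fun j => ∫ x in Set.Ioi (0:ℝ),
      Real.exp (-x) * x ^ (M - 1 - 2) * regGamma (M - 1) x ^ j with hBdef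
  have hint : ∀ j : ℕ, IntegrableOn
      (fun x : ℝ => Real.exp (-x) * x ^ (M - 1 - 2) * regGamma (M - 1) x ^ j) (Set.Ioi 0) :=
    fun j => integrable_main _ j (M - 1) hM1'
  have claimA : alphaMK (M - 1) (K - 1) = ((K : ℝ) - 1) / Γ' * B (K - 2) := by
    unfold alphaMK
    rw [hBdef, ← integral_const_mul]
    refine setIntegral_congr_fun measurableSet_Ioi (fun x hx => ?_)
    have h1 : (K - 1 : ℕ) - 1 = K - 2 := by omega
    have h2 : ((K - 1 : ℕ) : ℝ) = (K : ℝ) - 1 := by push_cast [Nat.cast_sub (by omega : 1 ≤ K)]; ring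
    rw [h1, h2, ← hΓ'def]
    field_simp
  have claimB : alphaMK (M - 1) K = (K : ℝ) / Γ' * B (K - 1) := by
    unfold alphaMK
    rw [hBdef, ← integral_const_mul]
    refine setIntegral_congr_fun measurableSet_Ioi (fun x hx => ?_)
    rw [← hΓ'def]
    field_simp
  have claimC : (∫ x in Set.Ioi (0:ℝ), x⁻¹ * fOrd (M - 1) 2 K x)
      = (K : ℝ) * ((K : ℝ) - 1) / Γ' * (B (K - 2) - B (K - 1)) := by
    have step : (∫ x in Set.Ioi (0:ℝ), x⁻¹ * fOrd (M - 1) 2 K x)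
        = ∫ x in Set.Ioi (0:ℝ), (K : ℝ) * ((K : ℝ) - 1) / Γ' *
            (Real.exp (-x) * x ^ (M - 1 - 2) * regGamma (M - 1) x ^ (K - 2)
              - Real.exp (-x) * x ^ (M - 1 - 2) * regGamma (M - 1) x ^ (K - 1)) := by
      refine setIntegral_congr_fun measurableSet_Ioi (fun x hx => ?_)
      have hx0 : (0:ℝ) < x := hx
      simp only [fOrd, gammaDens]
      have hpow : x ^ (M - 1 - 1) = x ^ (M - 1 - 2) * x := by
        rw [show M - 1 - 1 = (M - 1 - 2) + 1 by omega, pow_succ]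
      have hpowG : regGamma (M - 1) x ^ (K - 1) = regGamma (M - 1) x ^ (K - 2) * regGamma (M - 1) x := by
        rw [show K - 1 = (K - 2) + 1 by omega, pow_succ]
      have hne : ((K - 2).factorial : ℝ) ≠ 0 := by
        exact_mod_cast (Nat.factorial_pos _).ne'
      rw [hpow, hpowG, hfac2, hK1cast, ← hΓ'def]
      simp only [show (2:ℕ) - 1 = 1 from rfl, Nat.factorial_one, pow_one]
      field_simp
      ring
    rw [step, integral_const_mul, integral_sub (hint (K - 2)) (hint (K - 1))]
  rw [part1, claimA, claimB, claimC]
  ring
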